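/- For n ≥ 8 and k ∈ {0,1,2}, every strong tournament on n vertices has at most 2(k+1) vertices of out-degree (score) at least n-2-k. -/

import Mathlib

/-- A set `W` of vertices is acyclic if the digraph `r` restricted to `W`
has no directed cycle (the transitive closure restricted to `W` is irreflexive). -/
def AcyclicOn {V : Type*} (r : V → V → Prop) (W : Set V) : Prop :=
  ∀ v : V, ¬ Relation.TransGen (fun a b => a ∈ W ∧ b ∈ W ∧ r a b) v v

/-- A tournament: an irreflexive relation with exactly one arc between
every pair of distinct vertices. -/
def IsTournament {V : Type*} (r : V → V → Prop) : Prop :=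
  (∀ v : V, ¬ r v v) ∧ ∀ u v : V, u ≠ v → (r u v ↔ ¬ r v u)

/-- A feedback vertex set: its deletion leaves an acyclic digraph. -/
def IsFVS {V : Type*} (r : V → V → Prop) (F : Set V) : Prop :=
  AcyclicOn r Fᶜ

/-- A minimal feedback vertex set. -/
def IsMinimalFVS {V : Type*} (r : V → V → Prop) (F : Set V) : Prop :=
  IsFVS r F ∧ ∀ F' : Set V, F' ⊆ F → IsFVS r F' → F' = F

/-- A feedback vertex set of the subtournament induced on `S`. -/
def IsFVSOn {V : Type*} (r : V → V → Prop) (S F : Set V) : Prop :=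
  F ⊆ S ∧ AcyclicOn r (S \ F)

/-- A minimal feedback vertex set of the subtournament induced on `S`. -/
def IsMinimalFVSOn {V : Type*} (r : V → V → Prop) (S F : Set V) : Prop :=
  IsFVSOn r S F ∧ ∀ F' : Set V, F' ⊆ F → IsFVSOn r S F' → F' = F

/-- Strong (strongly connected): a directed path between any ordered pair. -/
def IsStrong {V : Type*} (r : V → V → Prop) : Prop :=
  ∀ u v : V, Relation.ReflTransGen r u v

/-- The subtournament induced on `S` is strong. -/
def IsStrongOn {V : Type*} (r : V → V → Prop) (S : Set V) : Prop :=
  ∀ u ∈ S, ∀ v ∈ S, Relation.ReflTransGen (fun a b => a ∈ S ∧ b ∈ S ∧ r a b) u v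

/-- The score (out-degree) of a vertex. -/
noncomputable def outScore {V : Type*} (r : V → V → Prop) (v : V) : ℕ :=
  {u : V | r v u}.ncard

/-- The number of minimal feedback vertex sets of a tournament. -/
noncomputable def fvsCount (V : Type*) (r : V → V → Prop) : ℕ :=
  {F : Set V | IsMinimalFVS r F}.ncard

/-- `maxMinFVS n` = maximum number of minimal FVSs over all `n`-vertex tournaments. -/
noncomputable def maxMinFVS (n : ℕ) : ℕ :=
  sSup {k : ℕ | ∃ r : Fin n → Fin n → Prop, IsTournament r ∧ fvsCount (Fin n) r = k}


/-- For `n ≥ 8` and `k ∈ {0,1,2}`, every strong tournament on `n` vertices has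
at most `2(k+1)` vertices of score at least `n - 2 - k`. -/
theorem stmt12 {V : Type*} [Fintype V] (n k : ℕ) (hn : 8 ≤ n) (hk : k ≤ 2)
    (r : V → V → Prop) (hT : IsTournament r) (hS : IsStrong r)
    (hcard : Fintype.card V = n) :
    {v : V | n - 2 - k ≤ outScore r v}.ncard ≤ 2 * (k + 1) := by

  classical
  have hscore : ∀ v, outScore r v = (Finset.univ.filter (fun u => r v u)).card := by
    intro v
    rw [outScore, Set.ncard_eq_toFinset_card']
    congr 1
    ext u
    simp
  have hset : {v : V | n - 2 - k ≤ outScore r v}.ncard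
      = (Finset.univ.filter (fun v => n - 2 - k ≤ outScore r v)).card := by
    rw [Set.ncard_eq_toFinset_card']
    congr 1
    ext v
    simp
  rw [hset]
  by_contra hcon
  push_neg at hcon
  have hH : 2 * k + 3 ≤ (Finset.univ.filter (fun v => n - 2 - k ≤ outScore r v)).card := by
    omega
  obtain ⟨S, hSsub, hScard⟩ := Finset.exists_subset_card_eq hH
  have hSmem : ∀ v ∈ S, n - 2 - k ≤ outScore r v := fun v hv =>
    (Finset.mem_filter.mp (hSsub hv)).2
  set f : V → V → ℕ := fun v u => if r v u then 1 else 0 with hf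
  have hpair : ∀ v ∈ S, ∀ u ∈ S, f v u + f u v = if v = u then 0 else 1 := by
    intro v _ u _
    by_cases h : v = u
    · subst h; simp [hf, hT.1 v]
    · by_cases hr : r v u
      · have : ¬ r u v := (hT.2 v u h).mp hr
        simp [hf, hr, this, h]
      · have : r u v := by
          by_contra hnr
          exact hr ((hT.2 v u h).mpr hnr)
        simp [hf, hr, this, h]
  have hrow : ∀ v ∈ S, ∑ u ∈ S, (if v = u then (0:ℕ) else 1) = 2 * k + 2 := by
    intro v hv
    have h1 : ∑ u ∈ S, ((if v = u then (0:ℕ) else 1) + (if v = u then 1 else 0))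
        = 2 * k + 3 := by
      have heach : ∀ u ∈ S, ((if v = u then (0:ℕ) else 1) + (if v = u then 1 else 0)) = 1 := by
        intro u _; by_cases h : v = u <;> simp [h]
      rw [Finset.sum_congr rfl heach, Finset.sum_const, hScard, smul_eq_mul, mul_one]
    have h2 : ∑ u ∈ S, (if v = u then (1:ℕ) else 0) = 1 := by
      rw [Finset.sum_ite_eq]; simp [hv]
    rw [Finset.sum_add_distrib, h2] at h1
    omega
  have hdouble : 2 * (∑ v ∈ S, ∑ u ∈ S, f v u) = (2 * k + 3) * (2 * k + 2) := by
    have h1 : ∑ v ∈ S, ∑ u ∈ S, f v u = ∑ v ∈ S, ∑ u ∈ S, f u v := Finset.sum_comm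
    have h2 : 2 * (∑ v ∈ S, ∑ u ∈ S, f v u) = ∑ v ∈ S, ∑ u ∈ S, (f v u + f u v) := by
      rw [two_mul]
      nth_rewrite 2 [h1]
      rw [← Finset.sum_add_distrib]
      refine Finset.sum_congr rfl (fun v _ => ?_)
      rw [← Finset.sum_add_distrib]
    rw [h2]
    have h3 : ∑ v ∈ S, ∑ u ∈ S, (f v u + f u v)
        = ∑ v ∈ S, ∑ u ∈ S, (if v = u then (0:ℕ) else 1) := by
      refine Finset.sum_congr rfl (fun v hv => Finset.sum_congr rfl (fun u hu => ?_))
      exact hpair v hv u hu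
    rw [h3]
    rw [Finset.sum_congr rfl hrow, Finset.sum_const, hScard, smul_eq_mul]
  set cross : V → ℕ := fun v => ((Finset.univ \ S).filter (fun u => r v u)).card with hcr
  have hcomplcard : (Finset.univ \ S).card = n - (2 * k + 3) := by
    rw [Finset.card_sdiff_of_subset (Finset.subset_univ S), Finset.card_univ, hcard, hScard]
  have hsplit : ∀ v ∈ S, outScore r v = (∑ u ∈ S, f v u) + cross v := by
    intro v _
    rw [hscore]
    have huniv : Finset.univ = S ∪ (Finset.univ \ S) := by
      rw [Finset.union_sdiff_of_subset (Finset.subset_univ S)]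
    conv_lhs => rw [huniv]
    rw [Finset.filter_union,
      Finset.card_union_of_disjoint
        (Finset.disjoint_filter_filter Finset.disjoint_sdiff)]
    congr 1
    rw [Finset.card_filter]
  have hcrossle : ∀ v, cross v ≤ n - (2 * k + 3) := by
    intro v
    calc cross v ≤ (Finset.univ \ S).card := Finset.card_filter_le _ _
      _ = n - (2 * k + 3) := hcomplcard
  have hsn : 2 * k + 3 < n := by omega
  have hall : ∀ v ∈ S, ∀ u, u ∉ S → r v u := by
    by_contra hno
    push_neg at hno
    obtain ⟨v₀, hv₀, u₀, hu₀, hnr⟩ := hno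
    have hcrossv₀ : cross v₀ < n - (2 * k + 3) := by
      have hsubset : (Finset.univ \ S).filter (fun u => r v₀ u) ⊂ Finset.univ \ S := by
        refine (Finset.ssubset_iff_of_subset (Finset.filter_subset _ _)).mpr ?_
        exact ⟨u₀, by simp [hu₀], by simp [hnr]⟩
      have := Finset.card_lt_card hsubset
      calc cross v₀ < (Finset.univ \ S).card := this
        _ = n - (2 * k + 3) := hcomplcard
    have hsum1 : ∑ v ∈ S, cross v < (2 * k + 3) * (n - (2 * k + 3)) := by
      have h := Finset.sum_lt_sum (fun v (_ : v ∈ S) => hcrossle v) ⟨v₀, hv₀, hcrossv₀⟩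
      rw [Finset.sum_const, hScard, smul_eq_mul] at h
      exact h
    have hsum2 : (2 * k + 3) * (n - 2 - k) ≤ ∑ v ∈ S, outScore r v := by
      calc (2 * k + 3) * (n - 2 - k) = ∑ _v ∈ S, (n - 2 - k) := by
            rw [Finset.sum_const, hScard, smul_eq_mul]
        _ ≤ ∑ v ∈ S, outScore r v := Finset.sum_le_sum hSmem
    have hsum3 : ∑ v ∈ S, outScore r v
        = (∑ v ∈ S, ∑ u ∈ S, f v u) + ∑ v ∈ S, cross v := by
      rw [← Finset.sum_add_distrib]
      exact Finset.sum_congr rfl hsplit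
    rw [hsum3] at hsum2
    set A := ∑ v ∈ S, ∑ u ∈ S, f v u with hA
    set B := ∑ v ∈ S, cross v with hB
    interval_cases k <;> omega
  obtain ⟨v₀, hv₀⟩ := Finset.card_pos.mp (show 0 < S.card by omega)
  have hu₀ : ∃ u, u ∉ S := by
    by_contra h
    push_neg at h
    have hSu : S = Finset.univ := Finset.eq_univ_iff_forall.mpr h
    rw [hSu, Finset.card_univ, hcard] at hScard
    omega
  obtain ⟨u₀, hu₀⟩ := hu₀
  have key : ∀ w, Relation.ReflTransGen r u₀ w → w ∉ S := by
    intro w hw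
    induction hw with
    | refl => exact hu₀
    | @tail b c hub hrbc ih =>
        intro hc
        have hcb : r c b := hall c hc b ih
        have hne : c ≠ b := fun h => ih (h ▸ hc)
        exact (hT.2 c b hne).mp hcb hrbc
  exact key v₀ (hS u₀ v₀) hv₀
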